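/- In the expansion t = −e^h, the Taylor expansion of the matrix ρ(ψ₀) = t⁶·Id + ((t¹⁵+1)/t²⁴)·M (with M as given) has degree-1 coefficient equal to F·diag(6, 6, −24, 6, 6)·F⁻¹, where F is the explicit integer matrix with rows (0,−1,0,0,0), (0,0,0,0,−1), (1,0,0,0,0), (0,0,1,1,−1), (0,0,0,1,0). Equivalently, the coefficient of h in ρ(ψ₀)|_{t=−e^h} equals that conjugated diagonal matrix. -/

import Mathlib

/-- The substitution `t = -e^h` as a power series in `ℚ[[h]]`. -/
noncomputable def tExp : PowerSeries ℚ := -(PowerSeries.exp ℚ)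

/-- `ρ(ψ₀)` after the substitution `t = -e^h`:
`t⁶·Id + ((t¹⁵+1)/t²⁴)·M` with `M` zero except in the fourth row. -/
noncomputable def rhoPsi0Exp : Matrix (Fin 5) (Fin 5) (PowerSeries ℚ) :=
  tExp ^ 6 • (1 : Matrix (Fin 5) (Fin 5) (PowerSeries ℚ)) +
    ((tExp ^ 15 + 1) * tExp⁻¹ ^ 24) •
      !![0, 0, 0, 0, 0;
         0, 0, 0, 0, 0;
         0, 0, 0, 0, 0;
         tExp ^ 10 - 1, -tExp ^ 10 + tExp ^ 5, tExp ^ 10 - 1,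
           -tExp ^ 15 + 1, -tExp ^ 10 + tExp ^ 5;
         0, 0, 0, 0, 0]

/-- The matrix `F`. -/
def FmatQ : Matrix (Fin 5) (Fin 5) ℚ :=
  !![0, -1, 0, 0, 0;
     0, 0, 0, 0, -1;
     1, 0, 0, 0, 0;
     0, 0, 1, 1, -1;
     0, 0, 0, 1, 0]

open PowerSeries

@[simp] lemma constantCoeff_rescale_exp (a : ℚ) :
    PowerSeries.constantCoeff (rescale a (exp ℚ)) = 1 := by
  rw [← PowerSeries.coeff_zero_eq_constantCoeff_apply]
  simp [coeff_rescale, coeff_exp]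

@[simp] lemma constantCoeff_tExp :
    PowerSeries.constantCoeff tExp = -1 := by
  simp [tExp, PowerSeries.constantCoeff_exp]

lemma coeff_one_rescale_exp (a : ℚ) :
    PowerSeries.coeff 1 (rescale a (exp ℚ)) = a := by
  simp [coeff_rescale, coeff_exp]

lemma rescale_exp_pow (a : ℚ) (k : ℕ) :
    (rescale a (exp ℚ)) ^ k = rescale ((k : ℚ) * a) (exp ℚ) := by
  induction k with
  | zero => simp [rescale_zero]
  | succ n ih =>
      rw [pow_succ, ih, exp_mul_exp_eq_exp_add]
      push_cast
      ring_nf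

lemma tExp_pow (n : ℕ) :
    tExp ^ n = (-1) ^ n * rescale (n : ℚ) (exp ℚ) := by
  rw [tExp, neg_pow, exp_pow_eq_rescale_exp]

lemma tExp_inv : tExp⁻¹ = -(rescale (-1 : ℚ) (exp ℚ)) := by
  rw [PowerSeries.inv_eq_iff_mul_eq_one]
  · rw [tExp, neg_mul_neg]
    have := PowerSeries.exp_mul_exp_eq_exp_add (-1 : ℚ) 1
    rw [rescale_one] at this
    simp only [RingHom.id_apply] at this
    rw [this]
    norm_num [rescale_zero]
  · simp

lemma tExp_inv_pow : tExp⁻¹ ^ 24 = rescale (-24 : ℚ) (exp ℚ) := by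
  rw [tExp_inv, neg_pow, rescale_exp_pow]
  norm_num

/-- The scalar `(t¹⁵+1)/t²⁴` after the substitution. -/
lemma scalar_eq :
    (tExp ^ 15 + 1) * tExp⁻¹ ^ 24 =
      -(rescale (-9 : ℚ) (exp ℚ)) + rescale (-24 : ℚ) (exp ℚ) := by
  rw [tExp_inv_pow, tExp_pow]
  norm_num [add_mul, neg_mul, PowerSeries.exp_mul_exp_eq_exp_add]

lemma constantCoeff_scalar :
    PowerSeries.constantCoeff ((tExp ^ 15 + 1) * tExp⁻¹ ^ 24) = 0 := by
  rw [scalar_eq]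
  simp

lemma coeff_one_scalar :
    PowerSeries.coeff 1 ((tExp ^ 15 + 1) * tExp⁻¹ ^ 24) = -15 := by
  rw [scalar_eq]
  simp [coeff_one_rescale_exp]
  norm_num

lemma coeff_one_scalar_mul (e : PowerSeries ℚ) :
    PowerSeries.coeff 1 (((tExp ^ 15 + 1) * tExp⁻¹ ^ 24) * e) =
      -15 * PowerSeries.constantCoeff e := by
  rw [PowerSeries.coeff_one_mul, constantCoeff_scalar, coeff_one_scalar]
  ring

lemma coeff_one_tExp_pow (n : ℕ) :
    PowerSeries.coeff 1 (tExp ^ n) = (-1) ^ n * n := by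
  rw [tExp_pow]
  rcases Nat.even_or_odd n with h | h
  · rw [h.neg_one_pow, one_mul, coeff_one_rescale_exp, h.neg_one_pow, one_mul]
  · rw [h.neg_one_pow, neg_one_mul, map_neg, coeff_one_rescale_exp,
      h.neg_one_pow, neg_one_mul]

set_option maxHeartbeats 1000000

/-- The degree-1 coefficient of `ρ(ψ₀)|_{t = -e^h}` equals
`F · diag(6, 6, -24, 6, 6) · F⁻¹`. -/
theorem delta1_psi0 :
    (Matrix.of fun i j : Fin 5 => PowerSeries.coeff 1 (rhoPsi0Exp i j)) =
      FmatQ * Matrix.diagonal ![6, 6, -24, 6, 6] * FmatQ⁻¹ := by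
  have hFinv : FmatQ⁻¹ =
      !![0, 0, 1, 0, 0;
         -1, 0, 0, 0, 0;
         0, -1, 0, 1, -1;
         0, 0, 0, 0, 1;
         0, -1, 0, 0, 0] := by
    apply Matrix.inv_eq_right_inv
    ext i j
    fin_cases i <;> fin_cases j <;>
      simp (config := { decide := true }) [FmatQ, Matrix.mul_apply,
        Fin.sum_univ_five, Matrix.one_apply, Matrix.vecHead, Matrix.vecTail]
  have hD : Matrix.diagonal ![(6 : ℚ), 6, -24, 6, 6] =
      !![6, 0, 0, 0, 0;
         0, 6, 0, 0, 0;
         0, 0, -24, 0, 0;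
         0, 0, 0, 6, 0;
         0, 0, 0, 0, 6] := by
    ext i j
    fin_cases i <;> fin_cases j <;>
      simp (config := { decide := true }) [Matrix.diagonal,
        Matrix.vecHead, Matrix.vecTail]
  have hlhs : (Matrix.of fun i j : Fin 5 => PowerSeries.coeff 1 (rhoPsi0Exp i j)) =
      !![6, 0, 0, 0, 0;
         0, 6, 0, 0, 0;
         0, 0, 6, 0, 0;
         0, 30, 0, -24, 30;
         0, 0, 0, 0, 6] := by
    ext i j
    fin_cases i <;> fin_cases j <;>
      · simp only [rhoPsi0Exp, Matrix.add_apply, Matrix.smul_apply, smul_eq_mul,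
          Matrix.of_apply, Matrix.cons_val', Matrix.cons_val_zero, Matrix.cons_val_one,
          Matrix.head_cons, Matrix.empty_val', Matrix.cons_val_fin_one,
          Matrix.head_fin_const, Fin.isValue, mul_one, mul_zero, map_add,
          coeff_one_scalar_mul, coeff_one_tExp_pow]
        simp (config := { decide := true }) only [Matrix.one_apply, if_true, if_false,
          map_zero, mul_zero, add_zero, zero_add, mul_one]
        norm_num [coeff_one_tExp_pow]
  rw [hlhs, hFinv, hD]
  ext i j
  fin_cases i <;> fin_cases j <;>
    norm_num [FmatQ, Matrix.mul_apply, Fin.sum_univ_succ]
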